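/- arXiv:0808.2004 — 6 statements merged into one kernel-verified Lean document; each statement's English description precedes it below -/
import Mathlib

section
/- Let a₁, a₂ ∈ ℝ be nonzero with a₁⁻¹ − a₂⁻¹ = 1, and let α, β, λ, μ, ω : ℝ² → ℝ be twice continuously differentiable functions satisfying at every point of ℝ² the linear system: ∂α/∂u = λ·cos ω, ∂α/∂v = −μ·sin ω, ∂β/∂u = λ·sin ω, ∂β/∂v = μ·cos ω, ∂λ/∂u = −cos ω·(α/a₁) − sin ω·(β/a₂) − μ·∂ω/∂v, ∂λ/∂v = −μ·∂ω/∂u, ∂μ/∂u = λ·∂ω/∂v, ∂μ/∂v = sin ω·(α/a₁) − cos ω·(β/a₂) + λ·∂ω/∂u. Then at every point where μ ≠ 0, the function ω satisfies the hyperbolic sine-Gordon equation ∂²ω/∂v² − ∂²ω/∂u² = cos ω · sin ω. -/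
/-- Partial derivative with respect to the first variable `u`. -/
noncomputable def pdu (f : ℝ × ℝ → ℝ) (p : ℝ × ℝ) : ℝ :=
  deriv (fun u => f (u, p.2)) p.1

/-- Partial derivative with respect to the second variable `v`. -/
noncomputable def pdv (f : ℝ × ℝ → ℝ) (p : ℝ × ℝ) : ℝ :=
  deriv (fun v => f (p.1, v)) p.2

lemma hasDerivAt_u {f : ℝ × ℝ → ℝ} {f' : (ℝ × ℝ) →L[ℝ] ℝ} {p : ℝ × ℝ}
    (h : HasFDerivAt f f' p) : HasDerivAt (fun u => f (u, p.2)) (f' (1, 0)) p.1 := by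
  have hg : HasDerivAt (fun u : ℝ => ((u, p.2) : ℝ × ℝ)) ((1 : ℝ), (0 : ℝ)) p.1 :=
    HasDerivAt.prodMk (hasDerivAt_id p.1) (hasDerivAt_const p.1 p.2)
  exact h.comp_hasDerivAt p.1 hg

lemma hasDerivAt_v {f : ℝ × ℝ → ℝ} {f' : (ℝ × ℝ) →L[ℝ] ℝ} {p : ℝ × ℝ}
    (h : HasFDerivAt f f' p) : HasDerivAt (fun v => f (p.1, v)) (f' (0, 1)) p.2 := by
  have hg : HasDerivAt (fun v : ℝ => ((p.1, v) : ℝ × ℝ)) ((0 : ℝ), (1 : ℝ)) p.2 :=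
    HasDerivAt.prodMk (hasDerivAt_const p.2 p.1) (hasDerivAt_id p.2)
  exact h.comp_hasDerivAt p.2 hg

lemma pdu_hasDerivAt {f : ℝ × ℝ → ℝ} {p : ℝ × ℝ} (h : DifferentiableAt ℝ f p) :
    HasDerivAt (fun u => f (u, p.2)) (pdu f p) p.1 := by
  have h2 := hasDerivAt_u h.hasFDerivAt
  have : pdu f p = fderiv ℝ f p (1, 0) := h2.deriv
  rw [this]; exact h2

lemma pdv_hasDerivAt {f : ℝ × ℝ → ℝ} {p : ℝ × ℝ} (h : DifferentiableAt ℝ f p) :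
    HasDerivAt (fun v => f (p.1, v)) (pdv f p) p.2 := by
  have h2 := hasDerivAt_v h.hasFDerivAt
  have : pdv f p = fderiv ℝ f p (0, 1) := h2.deriv
  rw [this]; exact h2

lemma contDiff_pdu {f : ℝ × ℝ → ℝ} (hf : ContDiff ℝ 2 f) : ContDiff ℝ 1 (pdu f) := by
  have hd : Differentiable ℝ f := hf.differentiable (by norm_num)
  have he : pdu f = fun q => fderiv ℝ f q (1, 0) :=
    funext fun q => (hasDerivAt_u (hd q).hasFDerivAt).deriv
  rw [he]
  exact (ContinuousLinearMap.apply ℝ ℝ ((1 : ℝ), (0 : ℝ))).contDiff.comp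
    (hf.fderiv_right (by norm_num))

lemma contDiff_pdv {f : ℝ × ℝ → ℝ} (hf : ContDiff ℝ 2 f) : ContDiff ℝ 1 (pdv f) := by
  have hd : Differentiable ℝ f := hf.differentiable (by norm_num)
  have he : pdv f = fun q => fderiv ℝ f q (0, 1) :=
    funext fun q => (hasDerivAt_v (hd q).hasFDerivAt).deriv
  rw [he]
  exact (ContinuousLinearMap.apply ℝ ℝ ((0 : ℝ), (1 : ℝ))).contDiff.comp
    (hf.fderiv_right (by norm_num))

lemma mixed_symm {f : ℝ × ℝ → ℝ} (hf : ContDiff ℝ 2 f) (p : ℝ × ℝ) :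
    pdu (pdv f) p = pdv (pdu f) p := by
  have hd : Differentiable ℝ f := hf.differentiable (by norm_num)
  have hf' : ContDiff ℝ 1 (fderiv ℝ f) := hf.fderiv_right (by norm_num)
  have hdf' : DifferentiableAt ℝ (fderiv ℝ f) p := (hf'.differentiable one_ne_zero) p
  have hsymm := second_derivative_symmetric (f' := fderiv ℝ f)
    (fun y => (hd y).hasFDerivAt) hdf'.hasFDerivAt
  have heu : pdu f = fun q => fderiv ℝ f q (1, 0) :=
    funext fun q => (hasDerivAt_u (hd q).hasFDerivAt).deriv
  have hev : pdv f = fun q => fderiv ℝ f q (0, 1) :=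
    funext fun q => (hasDerivAt_v (hd q).hasFDerivAt).deriv
  have h1 : HasFDerivAt (fun q => fderiv ℝ f q (0, 1))
      ((ContinuousLinearMap.apply ℝ ℝ ((0 : ℝ), (1 : ℝ))).comp
        (fderiv ℝ (fderiv ℝ f) p)) p :=
    (ContinuousLinearMap.apply ℝ ℝ ((0 : ℝ), (1 : ℝ))).hasFDerivAt.comp p hdf'.hasFDerivAt
  have h2 : HasFDerivAt (fun q => fderiv ℝ f q (1, 0))
      ((ContinuousLinearMap.apply ℝ ℝ ((1 : ℝ), (0 : ℝ))).comp
        (fderiv ℝ (fderiv ℝ f) p)) p :=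
    (ContinuousLinearMap.apply ℝ ℝ ((1 : ℝ), (0 : ℝ))).hasFDerivAt.comp p hdf'.hasFDerivAt
  have e1 : pdu (pdv f) p = fderiv ℝ (fderiv ℝ f) p (1, 0) (0, 1) := by
    rw [hev]; exact (hasDerivAt_u h1).deriv
  have e2 : pdv (pdu f) p = fderiv ℝ (fderiv ℝ f) p (0, 1) (1, 0) := by
    rw [heu]; exact (hasDerivAt_v h2).deriv
  rw [e1, e2, hsymm]

/-- The hyperbolic sine-Gordon equation is the compatibility condition of the linear
system governing real deformations of the imaginary region of the real hyperbolic
paraboloid: if `α, β, λ, μ, ω` satisfy the linear system everywhere, then at every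
point where `μ ≠ 0` one has `∂²ω/∂v² − ∂²ω/∂u² = cos ω · sin ω`. -/
theorem linear_system_implies_hyperbolic_sineGordon
    (a₁ a₂ : ℝ) (ha₁ : a₁ ≠ 0) (ha₂ : a₂ ≠ 0) (ha : a₁⁻¹ - a₂⁻¹ = 1)
    (al be lam mu om : ℝ × ℝ → ℝ)
    (hal : ContDiff ℝ 2 al) (hbe : ContDiff ℝ 2 be) (hlam : ContDiff ℝ 2 lam)
    (hmu : ContDiff ℝ 2 mu) (hom : ContDiff ℝ 2 om)
    (hau : ∀ p : ℝ × ℝ, pdu al p = lam p * Real.cos (om p))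
    (hav : ∀ p : ℝ × ℝ, pdv al p = -(mu p) * Real.sin (om p))
    (hbu : ∀ p : ℝ × ℝ, pdu be p = lam p * Real.sin (om p))
    (hbv : ∀ p : ℝ × ℝ, pdv be p = mu p * Real.cos (om p))
    (hlu : ∀ p : ℝ × ℝ, pdu lam p =
      -Real.cos (om p) * (al p / a₁) - Real.sin (om p) * (be p / a₂) - mu p * pdv om p)
    (hlv : ∀ p : ℝ × ℝ, pdv lam p = -(mu p) * pdu om p)
    (hmuu : ∀ p : ℝ × ℝ, pdu mu p = lam p * pdv om p)
    (hmuv : ∀ p : ℝ × ℝ, pdv mu p =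
      Real.sin (om p) * (al p / a₁) - Real.cos (om p) * (be p / a₂) + lam p * pdu om p) :
    ∀ p : ℝ × ℝ, mu p ≠ 0 →
      pdv (pdv om) p - pdu (pdu om) p = Real.cos (om p) * Real.sin (om p) := by
  intro p hmup
  have hdal : Differentiable ℝ al := hal.differentiable (by norm_num)
  have hdbe : Differentiable ℝ be := hbe.differentiable (by norm_num)
  have hdmu : Differentiable ℝ mu := hmu.differentiable (by norm_num)
  have hdom : Differentiable ℝ om := hom.differentiable (by norm_num)
  have hpduom : Differentiable ℝ (pdu om) := (contDiff_pdu hom).differentiable one_ne_zero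
  have hpdvom : Differentiable ℝ (pdv om) := (contDiff_pdv hom).differentiable one_ne_zero
  -- compute pdu (pdv lam) p
  have e1 : pdv lam = fun q => -(mu q) * pdu om q := funext hlv
  have h_mu_u : HasDerivAt (fun u => mu (u, p.2)) (pdu mu p) p.1 := pdu_hasDerivAt (hdmu p)
  have h_w1_u : HasDerivAt (fun u => pdu om (u, p.2)) (pdu (pdu om) p) p.1 :=
    pdu_hasDerivAt (hpduom p)
  have EA : pdu (pdv lam) p =
      -(pdu mu p) * pdu om p + -(mu p) * pdu (pdu om) p := by
    rw [e1]
    exact (h_mu_u.neg.mul h_w1_u).deriv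
  -- compute pdv (pdu lam) p
  have e2 : pdu lam = fun q =>
      -Real.cos (om q) * (al q / a₁) - Real.sin (om q) * (be q / a₂) - mu q * pdv om q :=
    funext hlu
  have h_om_v : HasDerivAt (fun v => om (p.1, v)) (pdv om p) p.2 := pdv_hasDerivAt (hdom p)
  have h_al_v : HasDerivAt (fun v => al (p.1, v)) (pdv al p) p.2 := pdv_hasDerivAt (hdal p)
  have h_be_v : HasDerivAt (fun v => be (p.1, v)) (pdv be p) p.2 := pdv_hasDerivAt (hdbe p)
  have h_mu_v : HasDerivAt (fun v => mu (p.1, v)) (pdv mu p) p.2 := pdv_hasDerivAt (hdmu p)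
  have h_w2_v : HasDerivAt (fun v => pdv om (p.1, v)) (pdv (pdv om) p) p.2 :=
    pdv_hasDerivAt (hpdvom p)
  have h_cos : HasDerivAt (fun v => Real.cos (om (p.1, v)))
      (-Real.sin (om p) * pdv om p) p.2 := by
    have := h_om_v.cos
    simpa using this
  have h_sin : HasDerivAt (fun v => Real.sin (om (p.1, v)))
      (Real.cos (om p) * pdv om p) p.2 := by
    have := h_om_v.sin
    simpa using this
  have EB : pdv (pdu lam) p =
      (-(-Real.sin (om p) * pdv om p) * (al p / a₁) + -Real.cos (om p) * (pdv al p / a₁))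
      - (Real.cos (om p) * pdv om p * (be p / a₂) + Real.sin (om p) * (pdv be p / a₂))
      - (pdv mu p * pdv om p + mu p * pdv (pdv om) p) := by
    rw [e2]
    exact (((h_cos.neg.mul (h_al_v.div_const a₁)).sub
      (h_sin.mul (h_be_v.div_const a₂))).sub (h_mu_v.mul h_w2_v)).deriv
  have heq : pdu (pdv lam) p = pdv (pdu lam) p := mixed_symm hlam p
  rw [EA, EB, hmuu p, hav p, hbv p, hmuv p] at heq
  have key : mu p * (pdv (pdv om) p - pdu (pdu om) p) =
      mu p * (Real.cos (om p) * Real.sin (om p)) := by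
    linear_combination heq +
      (mu p * Real.cos (om p) * Real.sin (om p)) * ha
  exact mul_left_cancel₀ hmup key
end

section
/- Let a₁, a₂ ∈ ℝ be nonzero, and let α, β, λ, μ, θ : ℝ² → ℝ be continuously differentiable functions satisfying at every point of ℝ² the differential part of the linear system: ∂α/∂u = λ·cosh θ, ∂α/∂v = μ·sinh θ, ∂β/∂u = λ·sinh θ, ∂β/∂v = μ·cosh θ, ∂λ/∂u = −cosh θ·(α/a₁) + sinh θ·(β/a₂) + μ·∂θ/∂v, ∂λ/∂v = μ·∂θ/∂u, ∂μ/∂u = λ·∂θ/∂v, ∂μ/∂v = sinh θ·(α/a₁) − cosh θ·(β/a₂) + λ·∂θ/∂u. Then the function μ² − λ² − (α²/a₁ − β²/a₂) has vanishing gradient on ℝ², i.e. it is a first integral of the system (constant on ℝ²). -/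
private lemma diff_fst {f : ℝ × ℝ → ℝ} (hf : ContDiff ℝ 1 f) (p : ℝ × ℝ) :
    DifferentiableAt ℝ (fun u => f (u, p.2)) p.1 :=
  ((hf.differentiable one_ne_zero).comp
    (differentiable_id.prodMk (differentiable_const _))) p.1

private lemma diff_snd {f : ℝ × ℝ → ℝ} (hf : ContDiff ℝ 1 f) (p : ℝ × ℝ) :
    DifferentiableAt ℝ (fun v => f (p.1, v)) p.2 :=
  (((hf.differentiable one_ne_zero).comp
    ((differentiable_const _).prodMk differentiable_id))) p.2

private lemma hdu {f : ℝ × ℝ → ℝ} (hf : ContDiff ℝ 1 f) (p : ℝ × ℝ) :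
    HasDerivAt (fun u => f (u, p.2)) (pdu f p) p.1 :=
  (diff_fst hf p).hasDerivAt

private lemma hdv {f : ℝ × ℝ → ℝ} (hf : ContDiff ℝ 1 f) (p : ℝ × ℝ) :
    HasDerivAt (fun v => f (p.1, v)) (pdv f p) p.2 :=
  (diff_snd hf p).hasDerivAt

/-- The quantity `μ² − λ² − (α²/a₁ − β²/a₂)` is a first integral of the differential part
of the linear system governing deformations of the real hyperbolic paraboloid: its
(total) derivative vanishes identically, hence it is constant on `ℝ²`. -/
theorem first_integral_of_linear_system
    (a₁ a₂ : ℝ) (ha₁ : a₁ ≠ 0) (ha₂ : a₂ ≠ 0)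
    (al be lam mu th : ℝ × ℝ → ℝ)
    (hal : ContDiff ℝ 1 al) (hbe : ContDiff ℝ 1 be) (hlam : ContDiff ℝ 1 lam)
    (hmu : ContDiff ℝ 1 mu) (hth : ContDiff ℝ 1 th)
    (hau : ∀ p : ℝ × ℝ, pdu al p = lam p * Real.cosh (th p))
    (hav : ∀ p : ℝ × ℝ, pdv al p = mu p * Real.sinh (th p))
    (hbu : ∀ p : ℝ × ℝ, pdu be p = lam p * Real.sinh (th p))
    (hbv : ∀ p : ℝ × ℝ, pdv be p = mu p * Real.cosh (th p))
    (hlu : ∀ p : ℝ × ℝ, pdu lam p =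
      -Real.cosh (th p) * (al p / a₁) + Real.sinh (th p) * (be p / a₂) + mu p * pdv th p)
    (hlv : ∀ p : ℝ × ℝ, pdv lam p = mu p * pdu th p)
    (hmuu : ∀ p : ℝ × ℝ, pdu mu p = lam p * pdv th p)
    (hmuv : ∀ p : ℝ × ℝ, pdv mu p =
      Real.sinh (th p) * (al p / a₁) - Real.cosh (th p) * (be p / a₂) + lam p * pdu th p)
    (F : ℝ × ℝ → ℝ)
    (hF : F = fun p : ℝ × ℝ =>
      mu p ^ 2 - lam p ^ 2 - (al p ^ 2 / a₁ - be p ^ 2 / a₂)) :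
    (∀ p : ℝ × ℝ, fderiv ℝ F p = 0) ∧ ∀ p q : ℝ × ℝ, F p = F q := by
  have hFdiff : Differentiable ℝ F := by
    rw [hF]
    have hal' := hal.differentiable one_ne_zero
    have hbe' := hbe.differentiable one_ne_zero
    have h1 : Differentiable ℝ fun p : ℝ × ℝ => al p ^ 2 / a₁ := by fun_prop
    have h2 : Differentiable ℝ fun p : ℝ × ℝ => be p ^ 2 / a₂ := by fun_prop
    exact (((hmu.differentiable one_ne_zero).pow 2).sub
      ((hlam.differentiable one_ne_zero).pow 2)).sub (h1.sub h2)
  -- partial derivatives of F vanish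
  have hFu : ∀ p : ℝ × ℝ, HasDerivAt (fun u => F (u, p.2)) 0 p.1 := by
    intro p
    have h : HasDerivAt (fun u => F (u, p.2))
        (2 * mu p ^ 1 * pdu mu p - 2 * lam p ^ 1 * pdu lam p -
          (2 * al p ^ 1 * pdu al p / a₁ - 2 * be p ^ 1 * pdu be p / a₂)) p.1 := by
      rw [hF]
      have := ((((hdu hmu p).pow 2).sub ((hdu hlam p).pow 2)).sub
        ((((hdu hal p).pow 2).div_const a₁).sub (((hdu hbe p).pow 2).div_const a₂)))
      simpa [Pi.pow_def, Pi.sub_def] using this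
    have hval : (2 * mu p ^ 1 * pdu mu p - 2 * lam p ^ 1 * pdu lam p -
        (2 * al p ^ 1 * pdu al p / a₁ - 2 * be p ^ 1 * pdu be p / a₂)) = 0 := by
      rw [hau p, hbu p, hlu p, hmuu p]
      field_simp
      ring
    rwa [hval] at h
  have hFv : ∀ p : ℝ × ℝ, HasDerivAt (fun v => F (p.1, v)) 0 p.2 := by
    intro p
    have h : HasDerivAt (fun v => F (p.1, v))
        (2 * mu p ^ 1 * pdv mu p - 2 * lam p ^ 1 * pdv lam p -
          (2 * al p ^ 1 * pdv al p / a₁ - 2 * be p ^ 1 * pdv be p / a₂)) p.2 := by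
      rw [hF]
      have := ((((hdv hmu p).pow 2).sub ((hdv hlam p).pow 2)).sub
        ((((hdv hal p).pow 2).div_const a₁).sub (((hdv hbe p).pow 2).div_const a₂)))
      simpa [Pi.pow_def, Pi.sub_def] using this
    have hval : (2 * mu p ^ 1 * pdv mu p - 2 * lam p ^ 1 * pdv lam p -
        (2 * al p ^ 1 * pdv al p / a₁ - 2 * be p ^ 1 * pdv be p / a₂)) = 0 := by
      rw [hav p, hbv p, hlv p, hmuv p]
      field_simp
      ring
    rwa [hval] at h
  have hzero : ∀ p : ℝ × ℝ, fderiv ℝ F p = 0 := by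
    intro p
    have h10 : fderiv ℝ F p ((1:ℝ), (0:ℝ)) = 0 := by
      have hline : HasDerivAt (fun u : ℝ => (u, p.2)) ((1:ℝ), (0:ℝ)) p.1 :=
        (hasDerivAt_id p.1).prodMk (hasDerivAt_const _ _)
      have h1 : HasDerivAt (fun u => F (u, p.2)) (fderiv ℝ F p ((1:ℝ), (0:ℝ))) p.1 :=
        (hFdiff p).hasFDerivAt.comp_hasDerivAt p.1 hline
      exact h1.unique (hFu p)
    have h01 : fderiv ℝ F p ((0:ℝ), (1:ℝ)) = 0 := by
      have hline : HasDerivAt (fun v : ℝ => (p.1, v)) ((0:ℝ), (1:ℝ)) p.2 :=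
        (hasDerivAt_const _ _).prodMk (hasDerivAt_id p.2)
      have h1 : HasDerivAt (fun v => F (p.1, v)) (fderiv ℝ F p ((0:ℝ), (1:ℝ))) p.2 :=
        (hFdiff p).hasFDerivAt.comp_hasDerivAt p.2 hline
      exact h1.unique (hFv p)
    refine ContinuousLinearMap.ext fun x => ?_
    have hx : (x : ℝ × ℝ) = x.1 • ((1:ℝ), (0:ℝ)) + x.2 • ((0:ℝ), (1:ℝ)) := by
      simp [Prod.ext_iff]
    rw [hx, map_add, map_smul, map_smul, h10, h01]
    simp
  exact ⟨hzero, fun p q => is_const_of_fderiv_eq_zero hFdiff hzero p q⟩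
end

section
/- (Peterson's deformations of the hyperbolic paraboloid.) Let a₁ > 0 > a₂ and s > 0, and let U := {(α,β) ∈ ℝ² : α² < a₁·sinh²s}. Define x_s : U → ℝ³ by x_s(α,β) := ( ∫₀^α √(a₁ − t²/sinh²s) dt, ∫₀^β √(−a₂ + t²/cosh²s) dt, (α² − β²·tanh²s)/(2·tanh s) ). Then at every point of U: |∂x_s/∂α|² = a₁ + α², (∂x_s/∂α)·(∂x_s/∂β) = −α·β, and |∂x_s/∂β|² = −a₂ + β². In particular the first fundamental form of x_s is independent of s and coincides with that of the hyperbolic paraboloid x₀(α,β) := (√a₁·α, √(−a₂)·β, (α²−β²)/2), so each surface x_s is isometric (in the induced metric) to the corresponding region of the hyperbolic paraboloid. -/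
/-- Partial derivative with respect to the first variable `α`. -/
noncomputable def pda (f : ℝ × ℝ → ℝ) (p : ℝ × ℝ) : ℝ :=
  deriv (fun a => f (a, p.2)) p.1

/-- Partial derivative with respect to the second variable `β`. -/
noncomputable def pdb (f : ℝ × ℝ → ℝ) (p : ℝ × ℝ) : ℝ :=
  deriv (fun b => f (p.1, b)) p.2

/-- Peterson's deformations of the hyperbolic paraboloid: the surface
`x_s(α,β) = (∫₀^α √(a₁ − t²/sinh²s) dt, ∫₀^β √(−a₂ + t²/cosh²s) dt,
(α² − β²·tanh²s)/(2·tanh s))` has, on `U = {α² < a₁·sinh²s}`, first fundamental form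
`E = a₁ + α²`, `F = −α·β`, `G = −a₂ + β²`, independent of `s` and equal to that of
the hyperbolic paraboloid `x₀(α,β) = (√a₁·α, √(−a₂)·β, (α²−β²)/2)`. -/
theorem peterson_deformations_hyperbolic_paraboloid
    (a₁ a₂ s : ℝ) (ha₁ : 0 < a₁) (ha₂ : a₂ < 0) (hs : 0 < s)
    (U : Set (ℝ × ℝ)) (hU : U = {p : ℝ × ℝ | p.1 ^ 2 < a₁ * Real.sinh s ^ 2})
    (X₁ X₂ X₃ : ℝ × ℝ → ℝ)
    (hX₁ : X₁ = fun p : ℝ × ℝ =>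
      ∫ t in (0:ℝ)..p.1, Real.sqrt (a₁ - t ^ 2 / Real.sinh s ^ 2))
    (hX₂ : X₂ = fun p : ℝ × ℝ =>
      ∫ t in (0:ℝ)..p.2, Real.sqrt (-a₂ + t ^ 2 / Real.cosh s ^ 2))
    (hX₃ : X₃ = fun p : ℝ × ℝ =>
      (p.1 ^ 2 - p.2 ^ 2 * Real.tanh s ^ 2) / (2 * Real.tanh s)) :
    ∀ p ∈ U,
      pda X₁ p ^ 2 + pda X₂ p ^ 2 + pda X₃ p ^ 2 = a₁ + p.1 ^ 2 ∧
      pda X₁ p * pdb X₁ p + pda X₂ p * pdb X₂ p + pda X₃ p * pdb X₃ p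
        = -(p.1 * p.2) ∧
      pdb X₁ p ^ 2 + pdb X₂ p ^ 2 + pdb X₃ p ^ 2 = -a₂ + p.2 ^ 2 := by
  intro p hp
  subst hU hX₁ hX₂ hX₃
  obtain ⟨α, β⟩ := p
  simp only [Set.mem_setOf_eq] at hp
  have hsinh : 0 < Real.sinh s := Real.sinh_pos_iff.mpr hs
  have hcosh : 0 < Real.cosh s := Real.cosh_pos s
  have htanh : 0 < Real.tanh s := by
    rw [Real.tanh_eq_sinh_div_cosh]; positivity
  -- the eight partial derivatives
  have h1a : pda (fun p : ℝ × ℝ =>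
      ∫ t in (0:ℝ)..p.1, Real.sqrt (a₁ - t ^ 2 / Real.sinh s ^ 2)) (α, β)
      = Real.sqrt (a₁ - α ^ 2 / Real.sinh s ^ 2) := by
    unfold pda
    exact Continuous.deriv_integral _ (by fun_prop) 0 α
  have h1b : pdb (fun p : ℝ × ℝ =>
      ∫ t in (0:ℝ)..p.1, Real.sqrt (a₁ - t ^ 2 / Real.sinh s ^ 2)) (α, β) = 0 := by
    unfold pdb; simp
  have h2a : pda (fun p : ℝ × ℝ =>
      ∫ t in (0:ℝ)..p.2, Real.sqrt (-a₂ + t ^ 2 / Real.cosh s ^ 2)) (α, β) = 0 := by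
    unfold pda; simp
  have h2b : pdb (fun p : ℝ × ℝ =>
      ∫ t in (0:ℝ)..p.2, Real.sqrt (-a₂ + t ^ 2 / Real.cosh s ^ 2)) (α, β)
      = Real.sqrt (-a₂ + β ^ 2 / Real.cosh s ^ 2) := by
    unfold pdb
    exact Continuous.deriv_integral _ (by fun_prop) 0 β
  have h3a : pda (fun p : ℝ × ℝ =>
      (p.1 ^ 2 - p.2 ^ 2 * Real.tanh s ^ 2) / (2 * Real.tanh s)) (α, β)
      = α / Real.tanh s := by
    unfold pda
    simp only
    rw [deriv_div_const]
    rw [deriv_fun_sub (by fun_prop) (by fun_prop)]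
    simp [deriv_pow_field]
    ring
  have h3b : pdb (fun p : ℝ × ℝ =>
      (p.1 ^ 2 - p.2 ^ 2 * Real.tanh s ^ 2) / (2 * Real.tanh s)) (α, β)
      = -(β * Real.tanh s) := by
    unfold pdb
    simp only
    rw [deriv_div_const]
    rw [deriv_fun_sub (by fun_prop) (by fun_prop)]
    simp [deriv_pow_field]
    field_simp
  simp only [h1a, h1b, h2a, h2b, h3a, h3b]
  have hE : a₁ - α ^ 2 / Real.sinh s ^ 2 ≥ 0 := by
    rw [ge_iff_le, sub_nonneg, div_le_iff₀ (by positivity)]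
    exact le_of_lt (by linarith [hp])
  have hG : -a₂ + β ^ 2 / Real.cosh s ^ 2 ≥ 0 := by
    have : (0:ℝ) ≤ β ^ 2 / Real.cosh s ^ 2 := by positivity
    linarith
  have hsq1 : Real.sqrt (a₁ - α ^ 2 / Real.sinh s ^ 2) ^ 2
      = a₁ - α ^ 2 / Real.sinh s ^ 2 := Real.sq_sqrt hE
  have hsq2 : Real.sqrt (-a₂ + β ^ 2 / Real.cosh s ^ 2) ^ 2
      = -a₂ + β ^ 2 / Real.cosh s ^ 2 := Real.sq_sqrt hG
  have htid : Real.tanh s = Real.sinh s / Real.cosh s := Real.tanh_eq_sinh_div_cosh s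
  have hid : Real.cosh s ^ 2 - Real.sinh s ^ 2 = 1 := by
    rw [Real.cosh_sq, Real.sinh_sq]; ring
  refine ⟨?_, ?_, ?_⟩
  · rw [hsq1, htid]
    field_simp
    nlinarith [hid]
  · rw [htid]
    field_simp
    ring
  · rw [hsq2, htid]
    field_simp
    nlinarith [hid]
end

section
/- (Tangency configuration for confocal hyperbolic paraboloids and its symmetry.) Let a₁ > z > 0 > a₂, set r₁ := √(1 − z/a₁), r₂ := √(1 − z/a₂), and for w ∈ {0, z} define x_w(α,β) := (√(a₁−w)·α, √(w−a₂)·β, (α²−β²+w)/2) ∈ ℝ³, and H(α,β) := α²/a₁ − β²/a₂ + 1. Then for all (α₀,β₀), (α₁,β₁) ∈ ℝ²: (i) the point x_z(α₁,β₁) lies in the affine tangent plane x₀(α₀,β₀) + span{∂_α x₀(α₀,β₀), ∂_β x₀(α₀,β₀)} if and only if (r₁α₁−α₀)² − (r₂β₁−β₀)² = −z·H(α₁,β₁); (ii) in that case x_z(α₁,β₁) = x₀(α₀,β₀) + (r₁α₁−α₀)·∂_α x₀(α₀,β₀) + (r₂β₁−β₀)·∂_β x₀(α₀,β₀); (iii)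 the condition is symmetric: (r₁α₁−α₀)² − (r₂β₁−β₀)² = −z·H(α₁,β₁) holds if and only if (r₁α₀−α₁)² − (r₂β₀−β₁)² = −z·H(α₀,β₀). -/
set_option maxHeartbeats 1000000


/-- Tangency configuration for the confocal hyperbolic paraboloids
`x_w(α,β) = (√(a₁−w)·α, √(w−a₂)·β, (α²−β²+w)/2)`, `w ∈ {0, z}`, and its symmetry:
with `r₁ = √(1−z/a₁)`, `r₂ = √(1−z/a₂)`, `H = α²/a₁ − β²/a₂ + 1`, the point
`x_z(α₁,β₁)` lies in the affine tangent plane of `x₀` at `(α₀,β₀)` iff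
`(r₁α₁−α₀)² − (r₂β₁−β₀)² = −z·H(α₁,β₁)`; in that case the tangential coordinates are
exactly `(r₁α₁−α₀, r₂β₁−β₀)`; and the condition is symmetric in `0 ↔ 1`. -/
theorem tangency_configuration_confocal_hyperbolic_paraboloids
    (a₁ a₂ z : ℝ) (hz : 0 < z) (hza : z < a₁) (ha₂ : a₂ < 0)
    (r₁ r₂ : ℝ) (hr₁ : r₁ = Real.sqrt (1 - z / a₁)) (hr₂ : r₂ = Real.sqrt (1 - z / a₂))
    (x : ℝ → ℝ × ℝ → ℝ × ℝ × ℝ)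
    (hx : x = fun w (p : ℝ × ℝ) =>
      (Real.sqrt (a₁ - w) * p.1, Real.sqrt (w - a₂) * p.2,
        (p.1 ^ 2 - p.2 ^ 2 + w) / 2))
    (H : ℝ × ℝ → ℝ)
    (hH : H = fun p : ℝ × ℝ => p.1 ^ 2 / a₁ - p.2 ^ 2 / a₂ + 1) :
    ∀ q₀ q₁ : ℝ × ℝ,
      ((∃ a b : ℝ,
          x z q₁ = x 0 q₀ + a • (fderiv ℝ (x 0) q₀ (1, 0))
            + b • (fderiv ℝ (x 0) q₀ (0, 1))) ↔
        (r₁ * q₁.1 - q₀.1) ^ 2 - (r₂ * q₁.2 - q₀.2) ^ 2 = -z * H q₁) ∧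
      ((r₁ * q₁.1 - q₀.1) ^ 2 - (r₂ * q₁.2 - q₀.2) ^ 2 = -z * H q₁ →
        x z q₁ = x 0 q₀ + (r₁ * q₁.1 - q₀.1) • (fderiv ℝ (x 0) q₀ (1, 0))
          + (r₂ * q₁.2 - q₀.2) • (fderiv ℝ (x 0) q₀ (0, 1))) ∧
      ((r₁ * q₁.1 - q₀.1) ^ 2 - (r₂ * q₁.2 - q₀.2) ^ 2 = -z * H q₁ ↔
        (r₁ * q₀.1 - q₁.1) ^ 2 - (r₂ * q₀.2 - q₁.2) ^ 2 = -z * H q₀) := by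
  have ha₁ : (0:ℝ) < a₁ := hz.trans hza
  set s1 := Real.sqrt a₁ with hs1
  set s2 := Real.sqrt (-a₂) with hs2
  have hs1pos : 0 < s1 := Real.sqrt_pos.mpr ha₁
  have hs2pos : 0 < s2 := Real.sqrt_pos.mpr (by linarith)
  have hs1sq : s1 ^ 2 = a₁ := Real.sq_sqrt ha₁.le
  have hs2sq : s2 ^ 2 = -a₂ := Real.sq_sqrt (by linarith)
  have hr1sq : r₁ ^ 2 = 1 - z / a₁ := by
    rw [hr₁, Real.sq_sqrt]
    rw [sub_nonneg, div_le_one ha₁]; linarith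
  have hr2sq : r₂ ^ 2 = 1 - z / a₂ := by
    rw [hr₂, Real.sq_sqrt]
    have : z / a₂ < 0 := div_neg_of_pos_of_neg hz ha₂
    linarith
  have hr1pos : 0 ≤ r₁ := hr₁ ▸ Real.sqrt_nonneg _
  have hr2pos : 0 ≤ r₂ := hr₂ ▸ Real.sqrt_nonneg _
  have ht1 : Real.sqrt (a₁ - z) = r₁ * s1 := by
    have : a₁ - z = (r₁ * s1) ^ 2 := by
      rw [mul_pow, hr1sq, hs1sq]; field_simp
    rw [this, Real.sqrt_sq (by positivity)]
  have ht2 : Real.sqrt (z - a₂) = r₂ * s2 := by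
    have : z - a₂ = (r₂ * s2) ^ 2 := by
      have ha₂ne : a₂ ≠ 0 := ne_of_lt ha₂
      rw [mul_pow, hr2sq, hs2sq]
      field_simp
      ring
    rw [this, Real.sqrt_sq (by positivity)]
  intro q₀ q₁
  obtain ⟨α₀, β₀⟩ := q₀
  obtain ⟨α₁, β₁⟩ := q₁
  -- derivative of x 0
  have hder : HasFDerivAt (x 0)
      (((s1 • ContinuousLinearMap.fst ℝ ℝ ℝ)).prod
        ((s2 • ContinuousLinearMap.snd ℝ ℝ ℝ).prod
          (α₀ • ContinuousLinearMap.fst ℝ ℝ ℝ - β₀ • ContinuousLinearMap.snd ℝ ℝ ℝ)))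
      (α₀, β₀) := by
    have hx0 : x 0 = fun p : ℝ × ℝ => (s1 * p.1, s2 * p.2, (p.1 ^ 2 - p.2 ^ 2 + 0) / 2) := by
      rw [hx]; simp [hs1, hs2]
    rw [hx0]
    have h1 : HasFDerivAt (fun p : ℝ × ℝ => s1 * p.1)
        (s1 • ContinuousLinearMap.fst ℝ ℝ ℝ) (α₀, β₀) := (hasFDerivAt_fst).const_mul s1
    have h2 : HasFDerivAt (fun p : ℝ × ℝ => s2 * p.2)
        (s2 • ContinuousLinearMap.snd ℝ ℝ ℝ) (α₀, β₀) := (hasFDerivAt_snd).const_mul s2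
    have h3 : HasFDerivAt (fun p : ℝ × ℝ => (p.1 ^ 2 - p.2 ^ 2 + 0) / 2)
        (α₀ • ContinuousLinearMap.fst ℝ ℝ ℝ - β₀ • ContinuousLinearMap.snd ℝ ℝ ℝ) (α₀, β₀) := by
      have e : (fun p : ℝ × ℝ => (p.1 ^ 2 - p.2 ^ 2 + 0) / 2)
          = fun p : ℝ × ℝ => (1/2) * (p.1 * p.1 - p.2 * p.2 + 0) := by funext p; ring
      rw [e]
      have := ((((hasFDerivAt_fst (𝕜 := ℝ) (p := ((α₀, β₀) : ℝ × ℝ))).mul hasFDerivAt_fst).sub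
        ((hasFDerivAt_snd).mul hasFDerivAt_snd)).add_const 0).const_mul (1/2)
      refine this.congr_fderiv ?_
      ext p <;> simp <;> ring
    exact h1.prodMk (h2.prodMk h3)
  have hv : fderiv ℝ (x 0) (α₀, β₀) (1, 0) = (s1, 0, α₀) := by
    rw [hder.fderiv]; simp
  have hw : fderiv ℝ (x 0) (α₀, β₀) (0, 1) = (0, s2, -β₀) := by
    rw [hder.fderiv]; simp
  have hxz : x z (α₁, β₁) = (r₁ * s1 * α₁, r₂ * s2 * β₁, (α₁ ^ 2 - β₁ ^ 2 + z) / 2) := by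
    rw [hx]; simp [ht1, ht2]
  have hx0q : x 0 (α₀, β₀) = (s1 * α₀, s2 * β₀, (α₀ ^ 2 - β₀ ^ 2 + 0) / 2) := by
    rw [hx]; simp [hs1, hs2]
  simp only [hv, hw, hxz, hx0q, hH, Prod.smul_mk, Prod.mk_add_mk, Prod.mk.injEq, smul_eq_mul]
  clear hder hv hw
  refine ⟨⟨?_, ?_⟩, ?_, ?_⟩
  · rintro ⟨a, b, h1, h2, h3⟩
    have ha : a = r₁ * α₁ - α₀ :=
      mul_right_cancel₀ (ne_of_gt hs1pos) (by linear_combination -h1)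
    have hb : b = r₂ * β₁ - β₀ :=
      mul_right_cancel₀ (ne_of_gt hs2pos) (by linear_combination -h2)
    subst ha hb
    linear_combination 2 * h3 + α₁ ^ 2 * hr1sq - β₁ ^ 2 * hr2sq
  · intro h
    refine ⟨r₁ * α₁ - α₀, r₂ * β₁ - β₀, by ring, by ring, ?_⟩
    linear_combination h / 2 - (α₁ ^ 2 / 2) * hr1sq + (β₁ ^ 2 / 2) * hr2sq
  · intro h
    refine ⟨by ring, by ring, ?_⟩
    linear_combination h / 2 - (α₁ ^ 2 / 2) * hr1sq + (β₁ ^ 2 / 2) * hr2sq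
  · constructor <;> intro h
    · linear_combination h + (α₀ ^ 2 - α₁ ^ 2) * hr1sq - (β₀ ^ 2 - β₁ ^ 2) * hr2sq
    · linear_combination h + (α₁ ^ 2 - α₀ ^ 2) * hr1sq - (β₁ ^ 2 - β₀ ^ 2) * hr2sq
end

section
/- Let a₁ > 0 > a₂ and define x : ℝ² → ℝ³ by x(α,β) := (√a₁·α, √(−a₂)·β, (α²−β²)/2), and H(α,β) := α²/a₁ − β²/a₂ + 1 (note H > 0 everywhere). Define the tangent vector field V(α,β) := (∂_α(log √H))·∂_α x(α,β) − (∂_β(log √H))·∂_β x(α,β), where ∂_α(log √H) = (α/a₁)/H and ∂_β(log √H) = (−β/a₂)/H. Then at every point: V·(∂_α x) = α, V·(∂_β x) = −β, and |V|² = 1 − 1/H, where · is the Euclidean inner product on ℝ³. -/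
/-- Euclidean dot product on `ℝ × ℝ × ℝ`. -/
def dot3 (x y : ℝ × ℝ × ℝ) : ℝ :=
  x.1 * y.1 + x.2.1 * y.2.1 + x.2.2 * y.2.2

set_option maxHeartbeats 1000000 in
/-- For the real hyperbolic paraboloid `x(α,β) = (√a₁·α, √(−a₂)·β, (α²−β²)/2)` with
`H = α²/a₁ − β²/a₂ + 1 > 0`, the distinguished tangent vector field
`V = (∂_α log√H)·x_α − (∂_β log√H)·x_β`, with `∂_α log√H = (α/a₁)/H` and
`∂_β log√H = (−β/a₂)/H`, satisfies `V·x_α = α`, `V·x_β = −β` and `|V|² = 1 − 1/H`. -/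
theorem distinguished_tangent_vector_field_hyperbolic_paraboloid
    (a₁ a₂ : ℝ) (ha₁ : 0 < a₁) (ha₂ : a₂ < 0)
    (x : ℝ × ℝ → ℝ × ℝ × ℝ)
    (hx : x = fun p : ℝ × ℝ =>
      (Real.sqrt a₁ * p.1, Real.sqrt (-a₂) * p.2, (p.1 ^ 2 - p.2 ^ 2) / 2))
    (H : ℝ × ℝ → ℝ)
    (hH : H = fun p : ℝ × ℝ => p.1 ^ 2 / a₁ - p.2 ^ 2 / a₂ + 1)
    (V : ℝ × ℝ → ℝ × ℝ × ℝ)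
    (hV : V = fun p : ℝ × ℝ =>
      ((p.1 / a₁) / H p) • (fderiv ℝ x p (1, 0))
        - ((-p.2 / a₂) / H p) • (fderiv ℝ x p (0, 1))) :
    ∀ p : ℝ × ℝ,
      dot3 (V p) (fderiv ℝ x p (1, 0)) = p.1 ∧
      dot3 (V p) (fderiv ℝ x p (0, 1)) = -p.2 ∧
      dot3 (V p) (V p) = 1 - 1 / H p := by
  intro p
  have h1 : HasFDerivAt (fun p : ℝ × ℝ => Real.sqrt a₁ * p.1)
      (Real.sqrt a₁ • ContinuousLinearMap.fst ℝ ℝ ℝ) p :=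
    (hasFDerivAt_fst).const_mul _
  have h2 : HasFDerivAt (fun p : ℝ × ℝ => Real.sqrt (-a₂) * p.2)
      (Real.sqrt (-a₂) • ContinuousLinearMap.snd ℝ ℝ ℝ) p :=
    (hasFDerivAt_snd).const_mul _
  have h3a : HasFDerivAt (fun p : ℝ × ℝ => p.1 ^ 2)
      (p.1 • ContinuousLinearMap.fst ℝ ℝ ℝ + p.1 • ContinuousLinearMap.fst ℝ ℝ ℝ) p := by
    simpa [pow_two, Pi.mul_def] using (hasFDerivAt_fst (p := p)).mul hasFDerivAt_fst
  have h3b : HasFDerivAt (fun p : ℝ × ℝ => p.2 ^ 2)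
      (p.2 • ContinuousLinearMap.snd ℝ ℝ ℝ + p.2 • ContinuousLinearMap.snd ℝ ℝ ℝ) p := by
    simpa [pow_two, Pi.mul_def] using (hasFDerivAt_snd (p := p)).mul hasFDerivAt_snd
  have h3 : HasFDerivAt (fun p : ℝ × ℝ => (p.1 ^ 2 - p.2 ^ 2) / 2)
      ((2:ℝ)⁻¹ • (p.1 • ContinuousLinearMap.fst ℝ ℝ ℝ + p.1 • ContinuousLinearMap.fst ℝ ℝ ℝ -
        (p.2 • ContinuousLinearMap.snd ℝ ℝ ℝ + p.2 • ContinuousLinearMap.snd ℝ ℝ ℝ))) p := by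
    simpa [div_eq_inv_mul] using (h3a.sub h3b).const_mul ((2:ℝ)⁻¹)
  have hx' : HasFDerivAt x
      ((Real.sqrt a₁ • ContinuousLinearMap.fst ℝ ℝ ℝ).prod
        ((Real.sqrt (-a₂) • ContinuousLinearMap.snd ℝ ℝ ℝ).prod
          ((2:ℝ)⁻¹ • (p.1 • ContinuousLinearMap.fst ℝ ℝ ℝ + p.1 • ContinuousLinearMap.fst ℝ ℝ ℝ -
            (p.2 • ContinuousLinearMap.snd ℝ ℝ ℝ + p.2 • ContinuousLinearMap.snd ℝ ℝ ℝ))))) p := by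
    rw [hx]; exact h1.prodMk (h2.prodMk h3)
  have hf := hx'.fderiv
  have hα : fderiv ℝ x p (1, 0) = (Real.sqrt a₁, 0, p.1) := by
    rw [hf]
    simp only [ContinuousLinearMap.prod_apply, ContinuousLinearMap.smul_apply,
      ContinuousLinearMap.coe_fst', ContinuousLinearMap.coe_snd',
      ContinuousLinearMap.sub_apply, ContinuousLinearMap.coe_smul',
      Pi.smul_apply, smul_eq_mul, ContinuousLinearMap.add_apply]
    norm_num <;> ring_nf
  have hβ : fderiv ℝ x p (0, 1) = (0, Real.sqrt (-a₂), -p.2) := by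
    rw [hf]
    simp only [ContinuousLinearMap.prod_apply, ContinuousLinearMap.smul_apply,
      ContinuousLinearMap.coe_fst', ContinuousLinearMap.coe_snd',
      ContinuousLinearMap.sub_apply, ContinuousLinearMap.coe_smul',
      Pi.smul_apply, smul_eq_mul, ContinuousLinearMap.add_apply]
    norm_num <;> ring_nf
  have hVp : V p = ((p.1 / a₁) / H p * Real.sqrt a₁,
      -((-p.2 / a₂) / H p * Real.sqrt (-a₂)),
      (p.1 / a₁) / H p * p.1 + (-p.2 / a₂) / H p * p.2) := by
    rw [hV]
    simp only [hα, hβ, Prod.smul_mk, Prod.mk_sub_mk, smul_eq_mul]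
    norm_num <;> ring_nf
  have hs : Real.sqrt a₁ * Real.sqrt a₁ = a₁ := Real.mul_self_sqrt ha₁.le
  have ht : Real.sqrt (-a₂) * Real.sqrt (-a₂) = -a₂ := Real.mul_self_sqrt (by linarith)
  have hH0 : 0 < H p := by
    rw [hH]
    have h1' : 0 ≤ p.1 ^ 2 / a₁ := div_nonneg (sq_nonneg _) ha₁.le
    have h2' : p.2 ^ 2 / a₂ ≤ 0 := div_nonpos_of_nonneg_of_nonpos (sq_nonneg _) ha₂.le
    linarith
  have hHne : H p ≠ 0 := hH0.ne'
  have hHval : H p = p.1 ^ 2 / a₁ - p.2 ^ 2 / a₂ + 1 := by rw [hH]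
  have hs0 : Real.sqrt a₁ ≠ 0 := by positivity
  have ht0 : Real.sqrt (-a₂) ≠ 0 := by
    have : (0:ℝ) < -a₂ := by linarith
    positivity
  set sq1 := Real.sqrt a₁ with hsd
  set sq2 := Real.sqrt (-a₂) with htd
  have hA : a₁ = sq1 * sq1 := hs.symm
  have hB : a₂ = -(sq2 * sq2) := by linarith
  have hs1p : (0:ℝ) < sq1 := Real.sqrt_pos.mpr ha₁
  have hs2p : (0:ℝ) < sq2 := Real.sqrt_pos.mpr (by linarith)
  have hN0 : p.1 ^ 2 * (sq2 * sq2) + p.2 ^ 2 * (sq1 * sq1) + (sq1 * sq1) * (sq2 * sq2) ≠ 0 := by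
    positivity
  have hHval2 : H p = (p.1 ^ 2 * (sq2 * sq2) + p.2 ^ 2 * (sq1 * sq1) + (sq1 * sq1) * (sq2 * sq2))
      / ((sq1 * sq1) * (sq2 * sq2)) := by
    rw [hHval, hA, hB]
    field_simp
    ring
  refine ⟨?_, ?_, ?_⟩
  · rw [hVp, hα]
    simp only [dot3]
    rw [hHval2, hA, hB]
    field_simp
    ring
  · rw [hVp, hβ]
    simp only [dot3]
    rw [hHval2, hA, hB]
    field_simp
    ring
  · rw [hVp]
    simp only [dot3]
    rw [hHval2, hA, hB]
    field_simp
    ring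
end

section
/- (Reduction of the 0-soliton of the hyperbolic paraboloid to the hyperbolic pendulum equation.) Let a₁, a₂ ∈ ℝ be nonzero with a₁⁻¹ − a₂⁻¹ = 1, and let α, β, μ, θ : ℝ → ℝ be continuously differentiable functions (with θ twice differentiable wherever asserted below) satisfying for all v ∈ ℝ: α'(v) = μ(v)·sinh θ(v), β'(v) = μ(v)·cosh θ(v), μ(v)·θ'(v) = cosh θ(v)·(α(v)/a₁) − sinh θ(v)·(β(v)/a₂), and μ'(v) = sinh θ(v)·(α(v)/a₁) − cosh θ(v)·(β(v)/a₂). Then at every point v with μ(v) ≠ 0, θ satisfies the hyperbolic pendulum equation θ''(v) = sinh θ(v) · cosh θ(v). -/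
/-- Reduction of the 0-soliton of the hyperbolic paraboloid to the hyperbolic pendulum
equation: if `α, β, μ, θ : ℝ → ℝ` satisfy the degenerate (λ = 0) ODE system
`α' = μ·sinh θ`, `β' = μ·cosh θ`, `μ·θ' = cosh θ·(α/a₁) − sinh θ·(β/a₂)`,
`μ' = sinh θ·(α/a₁) − cosh θ·(β/a₂)`, then wherever `μ ≠ 0` (and `θ` is twice
differentiable) one has `θ'' = sinh θ · cosh θ`. -/
theorem zero_soliton_hyperbolic_pendulum
    (a₁ a₂ : ℝ) (ha₁ : a₁ ≠ 0) (ha₂ : a₂ ≠ 0) (ha : a₁⁻¹ - a₂⁻¹ = 1)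
    (al be mu th : ℝ → ℝ)
    (hal : ContDiff ℝ 1 al) (hbe : ContDiff ℝ 1 be)
    (hmu : ContDiff ℝ 1 mu) (hth : ContDiff ℝ 2 th)
    (h1 : ∀ v : ℝ, deriv al v = mu v * Real.sinh (th v))
    (h2 : ∀ v : ℝ, deriv be v = mu v * Real.cosh (th v))
    (h3 : ∀ v : ℝ, mu v * deriv th v =
      Real.cosh (th v) * (al v / a₁) - Real.sinh (th v) * (be v / a₂))
    (h4 : ∀ v : ℝ, deriv mu v =
      Real.sinh (th v) * (al v / a₁) - Real.cosh (th v) * (be v / a₂)) :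
    ∀ v : ℝ, mu v ≠ 0 →
      deriv (deriv th) v = Real.sinh (th v) * Real.cosh (th v) := by
  have hth2 : ContDiff ℝ (1 + 1) th := by exact_mod_cast hth
  obtain ⟨hthd, _, hthd'⟩ := contDiff_succ_iff_deriv.mp hth2
  intro v hv
  -- derivatives at v
  have hA : HasDerivAt al (deriv al v) v := (hal.differentiable one_ne_zero v).hasDerivAt
  have hB : HasDerivAt be (deriv be v) v := (hbe.differentiable one_ne_zero v).hasDerivAt
  have hM : HasDerivAt mu (deriv mu v) v := (hmu.differentiable one_ne_zero v).hasDerivAt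
  have hT : HasDerivAt th (deriv th v) v := (hthd v).hasDerivAt
  have hT' : HasDerivAt (deriv th) (deriv (deriv th) v) v :=
    (hthd'.differentiable one_ne_zero v).hasDerivAt
  -- LHS of h3
  have hL : HasDerivAt (fun v => mu v * deriv th v)
      (deriv mu v * deriv th v + mu v * deriv (deriv th) v) v := hM.mul hT'
  -- RHS of h3
  have hR : HasDerivAt (fun v =>
      Real.cosh (th v) * (al v / a₁) - Real.sinh (th v) * (be v / a₂))
      ((Real.sinh (th v) * deriv th v) * (al v / a₁)
        + Real.cosh (th v) * (deriv al v / a₁)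
        - ((Real.cosh (th v) * deriv th v) * (be v / a₂)
        + Real.sinh (th v) * (deriv be v / a₂))) v :=
    ((hT.cosh.mul (hA.div_const a₁)).sub (hT.sinh.mul (hB.div_const a₂)))
  have heq : (fun v => mu v * deriv th v) =
      (fun v => Real.cosh (th v) * (al v / a₁) - Real.sinh (th v) * (be v / a₂)) :=
    funext h3
  rw [heq] at hL
  have key := hL.unique hR
  rw [h1 v, h2 v, h4 v] at key
  -- key : μ'-expr * θ' + μ * θ'' = ...
  have hd : deriv (deriv th) v * mu v = Real.sinh (th v) * Real.cosh (th v) * mu v := by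
    have haa : a₂ - a₁ = a₁ * a₂ := by field_simp at ha ⊢; linarith
    field_simp at key
    have hd2 : deriv (deriv th) v * mu v * (a₁ * a₂)
        = Real.sinh (th v) * Real.cosh (th v) * mu v * (a₁ * a₂) := by
      linear_combination key + Real.sinh (th v) * Real.cosh (th v) * mu v * haa
    exact mul_right_cancel₀ (mul_ne_zero ha₁ ha₂) hd2
  exact mul_right_cancel₀ hv hd
end
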